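/- For every z > 0 the following upper bounds hold: ν₊(z) ≤ (1/s(z)) · [ c_Y(-z) - c_Y(z) - |s(-z)| ν((-∞,-z]) ]₊ · 1_{z > ρ₊(z)} + ν({y : |y| ≥ z}), and ν₋(z) ≤ (1/|s(-z)|) · [ c_Y(z) - c_Y(-z) - s(z) ν([z,∞)) ]₊ · 1_{z > ρ₋(z)} + ν({y : |y| ≥ z}), where [a]₊ = max(a,0) and 1_A is the indicator of A. -/

import Mathlib

open MeasureTheory Set Filter
open scoped ENNReal NNReal Classical

/-- The function `c_Y` of the paper: `c_Y y = ∫_{[0,∞)} min(s(y),s(w)) ν(dw)` for `y ≥ 0`,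
`c_Y y = ∫_{(-∞,0)} min(|s(y)|,|s(w)|) ν(dw)` for `y < 0`. -/
noncomputable def cY (s : ℝ → ℝ) (ν : Measure ℝ) (y : ℝ) : ℝ :=
  if 0 ≤ y then ∫ w in Ici (0 : ℝ), min (s y) (s w) ∂ν
  else ∫ w in Iio (0 : ℝ), min |s y| |s w| ∂ν

/-- The slope `(c_Y(z) - c_Y(-y))/(s(z) - s(-y))` in the definition of `ζ₊, ρ₊`. -/
noncomputable def slopeYPlus (s : ℝ → ℝ) (ν : Measure ℝ) (z y : ℝ) : ℝ :=
  (cY s ν z - cY s ν (-y)) / (s z - s (-y))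

/-- The slope `(c_Y(y) - c_Y(-z))/(s(y) - s(-z))` in the definition of `ζ₋, ρ₋`. -/
noncomputable def slopeYMinus (s : ℝ → ℝ) (ν : Measure ℝ) (z y : ℝ) : ℝ :=
  (cY s ν y - cY s ν (-z)) / (s y - s (-z))

/-- The set of `y > 0` attaining the infimum in the definition of `ρ₊(z)`. -/
def argYPlus (s : ℝ → ℝ) (ν : Measure ℝ) (z : ℝ) : Set ℝ :=
  {y | 0 < y ∧ ∀ x, 0 < x → slopeYPlus s ν z y ≤ slopeYPlus s ν z x}

/-- The set of `y > 0` attaining the supremum in the definition of `ρ₋(z)`. -/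
def argYMinus (s : ℝ → ℝ) (ν : Measure ℝ) (z : ℝ) : Set ℝ :=
  {y | 0 < y ∧ ∀ x, 0 < x → slopeYMinus s ν z x ≤ slopeYMinus s ν z y}

/-- `ζ₊(z) = -inf_{y>0} (c_Y(z)-c_Y(-y))/(s(z)-s(-y))` if attained, `0` otherwise. -/
noncomputable def zetaPlus (s : ℝ → ℝ) (ν : Measure ℝ) (z : ℝ) : ℝ :=
  if (argYPlus s ν z).Nonempty then -sInf (slopeYPlus s ν z '' Ioi 0) else 0

/-- `ζ₋(z) = sup_{y>0} (c_Y(y)-c_Y(-z))/(s(y)-s(-z))` if attained, `0` otherwise. -/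
noncomputable def zetaMinus (s : ℝ → ℝ) (ν : Measure ℝ) (z : ℝ) : ℝ :=
  if (argYMinus s ν z).Nonempty then sSup (slopeYMinus s ν z '' Ioi 0) else 0

/-- `ν₊(z) = ζ₊(z) + ν([z,∞))`, the tail distribution function of the supremum of the
stopped process for the optimal embedding. -/
noncomputable def nuPlus (s : ℝ → ℝ) (ν : Measure ℝ) (z : ℝ) : ℝ :=
  zetaPlus s ν z + (ν (Ici z)).toReal

/-- `ν₋(z) = ν((-∞,-z]) + ζ₋(z)`, the tail distribution function of minus the infimum of
the stopped process for the optimal embedding. -/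
noncomputable def nuMinus (s : ℝ → ℝ) (ν : Measure ℝ) (z : ℝ) : ℝ :=
  (ν (Iic (-z))).toReal + zetaMinus s ν z

lemma s_neg_neg {s : ℝ → ℝ} (hmono : StrictMono s) (hs0 : s 0 = 0) {y : ℝ} (hy : 0 < y) :
    s (-y) < 0 := by
  have := hmono (show -y < 0 by linarith); rwa [hs0] at this

lemma s_pos' {s : ℝ → ℝ} (hmono : StrictMono s) (hs0 : s 0 = 0) {y : ℝ} (hy : 0 < y) :
    0 < s y := by
  have := hmono hy; rwa [hs0] at this

lemma min_abs_integrableOn {s : ℝ → ℝ} (hs : Continuous s) {ν : Measure ℝ} [IsFiniteMeasure ν]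
    {c : ℝ} (hc : 0 ≤ c) : IntegrableOn (fun w => min c |s w|) (Iio (0:ℝ)) ν := by
  refine Integrable.mono' (integrable_const c)
    ((continuous_const.min hs.abs).aestronglyMeasurable) (ae_of_all _ fun w => ?_)
  rw [Real.norm_eq_abs, abs_of_nonneg (le_min hc (abs_nonneg _))]
  exact min_le_left _ _

lemma min_s_integrableOn {s : ℝ → ℝ} (hs : Continuous s) (hmono : StrictMono s) (hs0 : s 0 = 0)
    {ν : Measure ℝ} [IsFiniteMeasure ν] {c : ℝ} (hc : 0 ≤ c) :
    IntegrableOn (fun w => min c (s w)) (Ici (0:ℝ)) ν := by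
  refine Integrable.mono' (integrable_const c)
    ((continuous_const.min hs).aestronglyMeasurable) ?_
  rw [ae_restrict_iff' measurableSet_Ici]
  refine ae_of_all _ fun w hw => ?_
  have h0 : 0 ≤ s w := by have := hmono.monotone (mem_Ici.mp hw); rwa [hs0] at this
  rw [Real.norm_eq_abs, abs_of_nonneg (le_min hc h0)]
  exact min_le_left _ _

lemma indicator_const_setIntegral {ν : Measure ℝ} [IsFiniteMeasure ν] {S T : Set ℝ}
    (hT : MeasurableSet T) (hTS : T ⊆ S) (c : ℝ) :
    ∫ w in S, T.indicator (fun _ => c) w ∂ν = c * (ν T).toReal := by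
  rw [setIntegral_indicator hT, inter_eq_self_of_subset_right hTS, setIntegral_const,
    smul_eq_mul, mul_comm, measureReal_def]

lemma g_diff_le {s : ℝ → ℝ} (hs : Continuous s) (hmono : StrictMono s) (hs0 : s 0 = 0)
    {ν : Measure ℝ} [IsFiniteMeasure ν] {a b : ℝ} (ha : 0 < a) (hab : a ≤ b) :
    (∫ w in Iio (0:ℝ), min (-s (-b)) |s w| ∂ν) - (∫ w in Iio (0:ℝ), min (-s (-a)) |s w| ∂ν)
      ≤ (-s (-b) - -s (-a)) * (ν (Iio (-a))).toReal := by
  have hb : 0 < b := lt_of_lt_of_le ha hab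
  have hsa : s (-a) < 0 := s_neg_neg hmono hs0 ha
  have hsb : s (-b) < 0 := s_neg_neg hmono hs0 hb
  have hba : s (-b) ≤ s (-a) := hmono.monotone (by linarith)
  have hia : IntegrableOn (fun w => min (-s (-a)) |s w|) (Iio (0:ℝ)) ν :=
    min_abs_integrableOn hs (by linarith)
  have hib : IntegrableOn (fun w => min (-s (-b)) |s w|) (Iio (0:ℝ)) ν :=
    min_abs_integrableOn hs (by linarith)
  rw [← integral_sub hib hia,
    ← indicator_const_setIntegral (ν := ν) measurableSet_Iio
      (fun x (hx : x < -a) => (show x < 0 by linarith)) (-s (-b) - -s (-a))]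
  refine setIntegral_mono_on (hib.sub hia)
    ((integrable_const _).indicator measurableSet_Iio) measurableSet_Iio fun w hw => ?_
  by_cases hwa : w ∈ Iio (-a)
  · rw [indicator_of_mem hwa]
    rcases le_or_gt (|s w|) (-s (-a)) with h | h
    · rw [min_eq_right h, min_eq_right (h.trans (by linarith))]; linarith
    · rw [min_eq_left h.le]
      have := min_le_left (-s (-b)) (|s w|); linarith
  · rw [indicator_of_notMem hwa]
    have hw0 : s w < 0 := by
      have := hmono (mem_Iio.mp hw); rwa [hs0] at this
    have hw2 : s (-a) ≤ s w := hmono.monotone (not_lt.mp (fun h => hwa (mem_Iio.mpr h)))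
    rw [abs_of_neg hw0, min_eq_right (by linarith), min_eq_right (by linarith)]
    linarith

lemma g_diff_ge {s : ℝ → ℝ} (hs : Continuous s) (hmono : StrictMono s) (hs0 : s 0 = 0)
    {ν : Measure ℝ} [IsFiniteMeasure ν] {a b : ℝ} (ha : 0 < a) (hab : a ≤ b) :
    (-s (-b) - -s (-a)) * (ν (Iic (-b))).toReal
      ≤ (∫ w in Iio (0:ℝ), min (-s (-b)) |s w| ∂ν)
        - (∫ w in Iio (0:ℝ), min (-s (-a)) |s w| ∂ν) := by
  have hb : 0 < b := lt_of_lt_of_le ha hab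
  have hsa : s (-a) < 0 := s_neg_neg hmono hs0 ha
  have hsb : s (-b) < 0 := s_neg_neg hmono hs0 hb
  have hba : s (-b) ≤ s (-a) := hmono.monotone (by linarith)
  have hia : IntegrableOn (fun w => min (-s (-a)) |s w|) (Iio (0:ℝ)) ν :=
    min_abs_integrableOn hs (by linarith)
  have hib : IntegrableOn (fun w => min (-s (-b)) |s w|) (Iio (0:ℝ)) ν :=
    min_abs_integrableOn hs (by linarith)
  rw [← integral_sub hib hia,
    ← indicator_const_setIntegral (ν := ν) measurableSet_Iic
      (fun x (hx : x ≤ -b) => (show x < 0 by linarith)) (-s (-b) - -s (-a))]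
  refine setIntegral_mono_on ((integrable_const (μ := ν.restrict (Iio 0)) _).indicator measurableSet_Iic)
    (hib.sub hia) measurableSet_Iio fun w hw => ?_
  by_cases hwb : w ∈ Iic (-b)
  · rw [indicator_of_mem hwb]
    have hw2 : s w ≤ s (-b) := hmono.monotone (mem_Iic.mp hwb)
    have hw0 : s w < 0 := by linarith
    rw [abs_of_neg hw0, min_eq_left (by linarith), min_eq_left (by linarith)]
  · rw [indicator_of_notMem hwb]
    have : min (-s (-a)) |s w| ≤ min (-s (-b)) |s w| :=
      min_le_min (by linarith) le_rfl
    linarith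

lemma h_diff_le {s : ℝ → ℝ} (hs : Continuous s) (hmono : StrictMono s) (hs0 : s 0 = 0)
    {ν : Measure ℝ} [IsFiniteMeasure ν] {a b : ℝ} (ha : 0 < a) (hab : a ≤ b) :
    (∫ w in Ici (0:ℝ), min (s b) (s w) ∂ν) - (∫ w in Ici (0:ℝ), min (s a) (s w) ∂ν)
      ≤ (s b - s a) * (ν (Ioi a)).toReal := by
  have hb : 0 < b := lt_of_lt_of_le ha hab
  have hsa : 0 < s a := s_pos' hmono hs0 ha
  have hsb : 0 < s b := s_pos' hmono hs0 hb
  have hba : s a ≤ s b := hmono.monotone hab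
  have hia : IntegrableOn (fun w => min (s a) (s w)) (Ici (0:ℝ)) ν :=
    min_s_integrableOn hs hmono hs0 (by linarith)
  have hib : IntegrableOn (fun w => min (s b) (s w)) (Ici (0:ℝ)) ν :=
    min_s_integrableOn hs hmono hs0 (by linarith)
  rw [← integral_sub hib hia,
    ← indicator_const_setIntegral (ν := ν) measurableSet_Ioi
      (fun x (hx : a < x) => (show (0:ℝ) ≤ x by linarith)) (s b - s a)]
  refine setIntegral_mono_on (hib.sub hia)
    ((integrable_const _).indicator measurableSet_Ioi) measurableSet_Ici fun w hw => ?_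
  by_cases hwa : w ∈ Ioi a
  · rw [indicator_of_mem hwa]
    rcases le_or_gt (s w) (s a) with h | h
    · rw [min_eq_right h, min_eq_right (by linarith)]; linarith
    · rw [min_eq_left h.le]
      have := min_le_left (s b) (s w); linarith
  · rw [indicator_of_notMem hwa]
    have hw2 : s w ≤ s a := hmono.monotone (not_lt.mp (fun h => hwa (mem_Ioi.mpr h)))
    rw [min_eq_right (by linarith), min_eq_right (by linarith)]
    linarith

lemma h_diff_ge {s : ℝ → ℝ} (hs : Continuous s) (hmono : StrictMono s) (hs0 : s 0 = 0)
    {ν : Measure ℝ} [IsFiniteMeasure ν] {a b : ℝ} (ha : 0 < a) (hab : a ≤ b) :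
    (s b - s a) * (ν (Ici b)).toReal
      ≤ (∫ w in Ici (0:ℝ), min (s b) (s w) ∂ν) - (∫ w in Ici (0:ℝ), min (s a) (s w) ∂ν) := by
  have hb : 0 < b := lt_of_lt_of_le ha hab
  have hsa : 0 < s a := s_pos' hmono hs0 ha
  have hsb : 0 < s b := s_pos' hmono hs0 hb
  have hba : s a ≤ s b := hmono.monotone hab
  have hia : IntegrableOn (fun w => min (s a) (s w)) (Ici (0:ℝ)) ν :=
    min_s_integrableOn hs hmono hs0 (by linarith)
  have hib : IntegrableOn (fun w => min (s b) (s w)) (Ici (0:ℝ)) ν :=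
    min_s_integrableOn hs hmono hs0 (by linarith)
  rw [← integral_sub hib hia,
    ← indicator_const_setIntegral (ν := ν) measurableSet_Ici
      (fun x (hx : b ≤ x) => (show (0:ℝ) ≤ x by linarith)) (s b - s a)]
  refine setIntegral_mono_on ((integrable_const (μ := ν.restrict (Ici 0)) _).indicator measurableSet_Ici)
    (hib.sub hia) measurableSet_Ici fun w hw => ?_
  by_cases hwb : w ∈ Ici b
  · rw [indicator_of_mem hwb]
    have hw2 : s b ≤ s w := hmono.monotone (mem_Ici.mp hwb)
    rw [min_eq_left hw2, min_eq_left (by linarith)]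
  · rw [indicator_of_notMem hwb]
    have : min (s a) (s w) ≤ min (s b) (s w) := min_le_min (by linarith) le_rfl
    linarith

lemma le_measure_Iic_of_lt {ν : Measure ℝ} [IsFiniteMeasure ν] {a c : ℝ} (ha : a < 0)
    (h : ∀ t, a < t → t < 0 → c ≤ (ν (Iio t)).toReal) : c ≤ (ν (Iic a)).toReal := by
  set t : ℕ → ℝ := fun n => a * (1 - 1 / (n + 2)) with ht
  have htn : ∀ n : ℕ, a < t n ∧ t n < 0 := by
    intro n
    have h2 : (0:ℝ) < (n:ℝ) + 2 := by positivity
    have h3 : (0:ℝ) < 1 / ((n:ℝ) + 2) := by positivity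
    have h4 : 1 / ((n:ℝ) + 2) ≤ 1 / 2 := by
      rw [div_le_div_iff₀ h2 (by norm_num)]; push_cast; linarith [Nat.cast_nonneg (α := ℝ) n]
    constructor
    · simp only [ht]; nlinarith
    · simp only [ht]; nlinarith
  have hant : Antitone fun n : ℕ => Iio (t n) := by
    intro n m hnm
    refine Iio_subset_Iio ?_
    have h2 : (0:ℝ) < (n:ℝ) + 2 := by positivity
    have h3 : (0:ℝ) < (m:ℝ) + 2 := by positivity
    have : 1 / ((m:ℝ) + 2) ≤ 1 / ((n:ℝ) + 2) := by
      rw [div_le_div_iff₀ h3 h2]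
      have : (n:ℝ) ≤ (m:ℝ) := Nat.cast_le.mpr hnm
      linarith
    simp only [ht]; nlinarith
  have hiInter : ⋂ n, Iio (t n) = Iic a := by
    ext x
    simp only [mem_iInter, mem_Iio, mem_Iic]
    constructor
    · intro hx
      by_contra hxa
      push_neg at hxa
      obtain ⟨n, hn⟩ := exists_nat_gt ((-a) / (x - a))
      have hxa' : 0 < x - a := by linarith
      have h1 : -a < ((n:ℝ) + 2) * (x - a) := by
        rw [div_lt_iff₀ hxa'] at hn
        nlinarith [hxa'.le]
      have h2 : (0:ℝ) < (n:ℝ) + 2 := by positivity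
      have : t n < x := by
        simp only [ht]
        rw [mul_sub, mul_one]
        have : a * (1 / ((n:ℝ) + 2)) = a / ((n:ℝ) + 2) := by ring
        rw [this, sub_lt_iff_lt_add]
        have hd : a / ((n:ℝ) + 2) * ((n:ℝ) + 2) = a := div_mul_cancel₀ _ h2.ne'
        nlinarith [h1, hd, h2]
      linarith [hx n]
    · intro hx n
      exact lt_of_le_of_lt hx (htn n).1
  have htend := tendsto_measure_iInter_atTop (μ := ν) (s := fun n => Iio (t n))
    (fun n => measurableSet_Iio.nullMeasurableSet) hant ⟨0, measure_ne_top _ _⟩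
  rw [hiInter] at htend
  have htoReal := (ENNReal.tendsto_toReal (measure_ne_top ν (Iic a))).comp htend
  exact ge_of_tendsto' htoReal fun n => h (t n) (htn n).1 (htn n).2

lemma le_measure_Ici_of_lt {ν : Measure ℝ} [IsFiniteMeasure ν] {a c : ℝ} (ha : 0 < a)
    (h : ∀ t, 0 < t → t < a → c ≤ (ν (Ioi t)).toReal) : c ≤ (ν (Ici a)).toReal := by
  set t : ℕ → ℝ := fun n => a * (1 - 1 / (n + 2)) with ht
  have htn : ∀ n : ℕ, 0 < t n ∧ t n < a := by
    intro n
    have h2 : (0:ℝ) < (n:ℝ) + 2 := by positivity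
    have h3 : (0:ℝ) < 1 / ((n:ℝ) + 2) := by positivity
    have h4 : 1 / ((n:ℝ) + 2) ≤ 1 / 2 := by
      rw [div_le_div_iff₀ h2 (by norm_num)]; linarith [Nat.cast_nonneg (α := ℝ) n]
    constructor
    · simp only [ht]; nlinarith
    · simp only [ht]; nlinarith
  have hant : Antitone fun n : ℕ => Ioi (t n) := by
    intro n m hnm
    refine Ioi_subset_Ioi ?_
    have h2 : (0:ℝ) < (n:ℝ) + 2 := by positivity
    have h3 : (0:ℝ) < (m:ℝ) + 2 := by positivity
    have : 1 / ((m:ℝ) + 2) ≤ 1 / ((n:ℝ) + 2) := by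
      rw [div_le_div_iff₀ h3 h2]
      have : (n:ℝ) ≤ (m:ℝ) := Nat.cast_le.mpr hnm
      linarith
    simp only [ht]; nlinarith
  have hiInter : ⋂ n, Ioi (t n) = Ici a := by
    ext x
    simp only [mem_iInter, mem_Ioi, mem_Ici]
    constructor
    · intro hx
      by_contra hxa
      push_neg at hxa
      obtain ⟨n, hn⟩ := exists_nat_gt (a / (a - x))
      have hxa' : 0 < a - x := by linarith
      have h1 : a < ((n:ℝ) + 2) * (a - x) := by
        rw [div_lt_iff₀ hxa'] at hn
        nlinarith [hxa'.le]
      have h2 : (0:ℝ) < (n:ℝ) + 2 := by positivity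
      have : x < t n := by
        simp only [ht]
        rw [mul_sub, mul_one]
        have heq : a * (1 / ((n:ℝ) + 2)) = a / ((n:ℝ) + 2) := by ring
        rw [heq, lt_sub_iff_add_lt]
        have hd : a / ((n:ℝ) + 2) * ((n:ℝ) + 2) = a := div_mul_cancel₀ _ h2.ne'
        nlinarith [h1, hd, h2]
      linarith [hx n]
    · intro hx n
      exact lt_of_lt_of_le (htn n).2 hx
  have htend := tendsto_measure_iInter_atTop (μ := ν) (s := fun n => Ioi (t n))
    (fun n => measurableSet_Ioi.nullMeasurableSet) hant ⟨0, measure_ne_top _ _⟩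
  rw [hiInter] at htend
  have htoReal := (ENNReal.tendsto_toReal (measure_ne_top ν (Ici a))).comp htend
  exact ge_of_tendsto' htoReal fun n => h (t n) (htn n).1 (htn n).2

lemma cY_neg_eq {s : ℝ → ℝ} (hmono : StrictMono s) (hs0 : s 0 = 0) {ν : Measure ℝ}
    {y : ℝ} (hy : 0 < y) :
    cY s ν (-y) = ∫ w in Iio (0:ℝ), min (-s (-y)) |s w| ∂ν := by
  rw [cY, if_neg (not_le.mpr (by linarith : -y < 0)), abs_of_neg (s_neg_neg hmono hs0 hy)]

lemma cY_nonneg_eq {s : ℝ → ℝ} {ν : Measure ℝ} {y : ℝ} (hy : 0 ≤ y) :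
    cY s ν y = ∫ w in Ici (0:ℝ), min (s y) (s w) ∂ν := by
  rw [cY, if_pos hy]

lemma zetaPlus_eq_of_mem {s : ℝ → ℝ} {ν : Measure ℝ} {z y0 : ℝ} (hy0 : y0 ∈ argYPlus s ν z) :
    zetaPlus s ν z = -slopeYPlus s ν z y0 := by
  rw [zetaPlus, if_pos ⟨y0, hy0⟩]
  congr 1
  exact IsLeast.csInf_eq ⟨⟨y0, hy0.1, rfl⟩, by rintro b ⟨x, hx, rfl⟩; exact hy0.2 x hx⟩

lemma zetaMinus_eq_of_mem {s : ℝ → ℝ} {ν : Measure ℝ} {z y0 : ℝ} (hy0 : y0 ∈ argYMinus s ν z) :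
    zetaMinus s ν z = slopeYMinus s ν z y0 := by
  rw [zetaMinus, if_pos ⟨y0, hy0⟩]
  exact IsGreatest.csSup_eq ⟨⟨y0, hy0.1, rfl⟩, by rintro b ⟨x, hx, rfl⟩; exact hy0.2 x hx⟩

lemma step1_plus {s : ℝ → ℝ} (hs : Continuous s) (hmono : StrictMono s) (hs0 : s 0 = 0)
    {ν : Measure ℝ} [IsFiniteMeasure ν] {z y0 x : ℝ} (hz : 0 < z)
    (hy0 : y0 ∈ argYPlus s ν z) (hx : 0 < x) (hxy : x < y0) :
    zetaPlus s ν z ≤ (ν (Iio (-x))).toReal := by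
  have hy0p : 0 < y0 := hy0.1
  have hsz : 0 < s z := s_pos' hmono hs0 hz
  have hs0' : s (-y0) < 0 := s_neg_neg hmono hs0 hy0p
  have hsx' : s (-x) < 0 := s_neg_neg hmono hs0 hx
  have hD0 : 0 < s z - s (-y0) := by linarith
  have hDx : 0 < s z - s (-x) := by linarith
  have hu : s (-y0) < s (-x) := hmono (by linarith)
  have hmin : slopeYPlus s ν z y0 ≤ slopeYPlus s ν z x := hy0.2 x hx
  rw [slopeYPlus, slopeYPlus] at hmin
  have h1 : (cY s ν z - cY s ν (-y0)) * (s z - s (-x))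
      ≤ (cY s ν z - cY s ν (-x)) * (s z - s (-y0)) := (div_le_div_iff₀ hD0 hDx).mp hmin
  have hg' : cY s ν (-y0) - cY s ν (-x)
      ≤ (-s (-y0) - -s (-x)) * (ν (Iio (-x))).toReal := by
    rw [cY_neg_eq hmono hs0 hy0p, cY_neg_eq hmono hs0 hx]
    exact g_diff_le hs hmono hs0 hx hxy.le
  have hζ : zetaPlus s ν z = (cY s ν (-y0) - cY s ν z) / (s z - s (-y0)) := by
    rw [zetaPlus_eq_of_mem hy0, slopeYPlus]; ring
  rw [hζ, div_le_iff₀ hD0]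
  have key : (cY s ν (-y0) - cY s ν z) * (-s (-y0) - -s (-x))
      ≤ (cY s ν (-y0) - cY s ν (-x)) * (s z - s (-y0)) := by nlinarith [h1]
  have hA : 0 ≤ (ν (Iio (-x))).toReal := ENNReal.toReal_nonneg
  nlinarith [key, hg', hD0, hu, hA]

lemma step2_plus {s : ℝ → ℝ} (hs : Continuous s) (hmono : StrictMono s) (hs0 : s 0 = 0)
    {ν : Measure ℝ} [IsFiniteMeasure ν] {z y0 : ℝ} (hz : 0 < z)
    (hy0 : y0 ∈ argYPlus s ν z) (hy0z : y0 ≤ z) :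
    zetaPlus s ν z ≤
      (1 / s z) * max (cY s ν (-z) - cY s ν z - |s (-z)| * (ν (Iic (-z))).toReal) 0
        + (ν (Iic (-z))).toReal := by
  have hy0p : 0 < y0 := hy0.1
  have hsz : 0 < s z := s_pos' hmono hs0 hz
  have hs0' : s (-y0) < 0 := s_neg_neg hmono hs0 hy0p
  have hsz' : s (-z) < 0 := s_neg_neg hmono hs0 hz
  have habs : |s (-z)| = -s (-z) := abs_of_neg hsz'
  have hD0 : 0 < s z - s (-y0) := by linarith
  have huz : s (-z) ≤ s (-y0) := hmono.monotone (by linarith)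
  set A := (ν (Iic (-z))).toReal with hA'
  set M := max (cY s ν (-z) - cY s ν z - |s (-z)| * A) 0 with hM'
  have hA : 0 ≤ A := ENNReal.toReal_nonneg
  have hM0 : 0 ≤ M := le_max_right _ _
  have hM1 : cY s ν (-z) - cY s ν z - (-s (-z)) * A ≤ M := by
    rw [hM', ← habs]; exact le_max_left _ _
  have hg' : (-s (-z) - -s (-y0)) * A ≤ cY s ν (-z) - cY s ν (-y0) := by
    rw [cY_neg_eq hmono hs0 hy0p, cY_neg_eq hmono hs0 hz]
    exact g_diff_ge hs hmono hs0 hy0p hy0z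
  have hζ : zetaPlus s ν z = (cY s ν (-y0) - cY s ν z) / (s z - s (-y0)) := by
    rw [zetaPlus_eq_of_mem hy0, slopeYPlus]; ring
  rw [hζ, div_le_iff₀ hD0]
  have hMW : 1 / s z * M * s z = M := by field_simp
  have hq : 0 ≤ 1 / s z * M * (-s (-y0)) :=
    mul_nonneg (mul_nonneg (by positivity) hM0) (by linarith)
  have haZ : 0 ≤ A * s z := mul_nonneg hA hsz.le
  nlinarith [hg', hM1, hM0, hA, hMW, hq, haZ]

lemma zetaPlus_le {s : ℝ → ℝ} (hs : Continuous s) (hmono : StrictMono s) (hs0 : s 0 = 0)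
    {ν : Measure ℝ} [IsFiniteMeasure ν] {z : ℝ} (hz : 0 < z) :
    zetaPlus s ν z ≤
      (1 / s z) * max (cY s ν (-z) - cY s ν z - |s (-z)| * (ν (Iic (-z))).toReal) 0 *
          (if (argYPlus s ν z).Nonempty ∧ sInf (argYPlus s ν z) < z then (1 : ℝ) else 0)
        + (ν (Iic (-z))).toReal := by
  have hA : 0 ≤ (ν (Iic (-z))).toReal := ENNReal.toReal_nonneg
  by_cases hne : (argYPlus s ν z).Nonempty
  · by_cases hlt : sInf (argYPlus s ν z) < z
    · rw [if_pos ⟨hne, hlt⟩, mul_one]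
      obtain ⟨y0, hy0, hy0z⟩ : ∃ y0 ∈ argYPlus s ν z, y0 < z := by
        by_contra hc
        push_neg at hc
        exact absurd (le_csInf hne fun y hy => hc y hy) (not_le.mpr hlt)
      exact step2_plus hs hmono hs0 hz hy0 hy0z.le
    · rw [if_neg (by tauto), mul_zero, zero_add]
      obtain ⟨y0, hy0⟩ := hne
      have hbdd : BddBelow (argYPlus s ν z) := ⟨0, fun y hy => hy.1.le⟩
      have hzy0 : z ≤ y0 := le_trans (not_lt.mp hlt) (csInf_le hbdd hy0)
      have hy0p : 0 < y0 := hy0.1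
      have h1 : zetaPlus s ν z ≤ (ν (Iic (-y0))).toReal := by
        refine le_measure_Iic_of_lt (by linarith) fun t ht1 ht2 => ?_
        have := step1_plus hs hmono hs0 hz hy0 (x := -t) (by linarith) (by linarith)
        simpa using this
      refine h1.trans (ENNReal.toReal_mono (measure_ne_top ν _)
        (measure_mono (Iic_subset_Iic.mpr (by linarith))))
  · rw [zetaPlus, if_neg hne, if_neg (by tauto), mul_zero, zero_add]
    exact hA

lemma step1_minus {s : ℝ → ℝ} (hs : Continuous s) (hmono : StrictMono s) (hs0 : s 0 = 0)
    {ν : Measure ℝ} [IsFiniteMeasure ν] {z y0 x : ℝ} (hz : 0 < z)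
    (hy0 : y0 ∈ argYMinus s ν z) (hx : 0 < x) (hxy : x < y0) :
    zetaMinus s ν z ≤ (ν (Ioi x)).toReal := by
  have hy0p : 0 < y0 := hy0.1
  have hsz' : s (-z) < 0 := s_neg_neg hmono hs0 hz
  have hs0' : 0 < s y0 := s_pos' hmono hs0 hy0p
  have hsx' : 0 < s x := s_pos' hmono hs0 hx
  have hD0 : 0 < s y0 - s (-z) := by linarith
  have hDx : 0 < s x - s (-z) := by linarith
  have hv : s x < s y0 := hmono hxy
  have hmax : slopeYMinus s ν z x ≤ slopeYMinus s ν z y0 := hy0.2 x hx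
  rw [slopeYMinus, slopeYMinus] at hmax
  have h1 : (cY s ν x - cY s ν (-z)) * (s y0 - s (-z))
      ≤ (cY s ν y0 - cY s ν (-z)) * (s x - s (-z)) := (div_le_div_iff₀ hDx hD0).mp hmax
  have hg' : cY s ν y0 - cY s ν x ≤ (s y0 - s x) * (ν (Ioi x)).toReal := by
    rw [cY_nonneg_eq hy0p.le, cY_nonneg_eq hx.le]
    exact h_diff_le hs hmono hs0 hx hxy.le
  have hζ : zetaMinus s ν z = (cY s ν y0 - cY s ν (-z)) / (s y0 - s (-z)) := by
    rw [zetaMinus_eq_of_mem hy0, slopeYMinus]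
  rw [hζ, div_le_iff₀ hD0]
  have key : (cY s ν y0 - cY s ν (-z)) * (s y0 - s x)
      ≤ (cY s ν y0 - cY s ν x) * (s y0 - s (-z)) := by nlinarith [h1]
  have hA : 0 ≤ (ν (Ioi x)).toReal := ENNReal.toReal_nonneg
  nlinarith [key, hg', hD0, hv, hA]

lemma step2_minus {s : ℝ → ℝ} (hs : Continuous s) (hmono : StrictMono s) (hs0 : s 0 = 0)
    {ν : Measure ℝ} [IsFiniteMeasure ν] {z y0 : ℝ} (hz : 0 < z)
    (hy0 : y0 ∈ argYMinus s ν z) (hy0z : y0 ≤ z) :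
    zetaMinus s ν z ≤
      (1 / |s (-z)|) * max (cY s ν z - cY s ν (-z) - s z * (ν (Ici z)).toReal) 0
        + (ν (Ici z)).toReal := by
  have hy0p : 0 < y0 := hy0.1
  have hsz : 0 < s z := s_pos' hmono hs0 hz
  have hsz' : s (-z) < 0 := s_neg_neg hmono hs0 hz
  have hs0' : 0 < s y0 := s_pos' hmono hs0 hy0p
  have habs : |s (-z)| = -s (-z) := abs_of_neg hsz'
  rw [habs]
  have hD0 : 0 < s y0 - s (-z) := by linarith
  have hvz : s y0 ≤ s z := hmono.monotone hy0z
  set B := (ν (Ici z)).toReal with hB'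
  set M := max (cY s ν z - cY s ν (-z) - s z * B) 0 with hM'
  have hB : 0 ≤ B := ENNReal.toReal_nonneg
  have hM0 : 0 ≤ M := le_max_right _ _
  have hM1 : cY s ν z - cY s ν (-z) - s z * B ≤ M := le_max_left _ _
  have hg' : (s z - s y0) * B ≤ cY s ν z - cY s ν y0 := by
    rw [cY_nonneg_eq hy0p.le, cY_nonneg_eq hz.le]
    exact h_diff_ge hs hmono hs0 hy0p hy0z
  have hζ : zetaMinus s ν z = (cY s ν y0 - cY s ν (-z)) / (s y0 - s (-z)) := by
    rw [zetaMinus_eq_of_mem hy0, slopeYMinus]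
  rw [hζ, div_le_iff₀ hD0]
  have huz : 0 < -s (-z) := by linarith
  have hMW : 1 / (-s (-z)) * M * (-s (-z)) = M := by
    have h0 : s (-z) ≠ 0 := by linarith
    field_simp
  have hq : 0 ≤ 1 / (-s (-z)) * M * s y0 :=
    mul_nonneg (mul_nonneg (by positivity) hM0) hs0'.le
  have hBuz : 0 ≤ B * (-s (-z)) := mul_nonneg hB huz.le
  nlinarith [hg', hM1, hM0, hB, hMW, hq, hBuz]

lemma zetaMinus_le {s : ℝ → ℝ} (hs : Continuous s) (hmono : StrictMono s) (hs0 : s 0 = 0)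
    {ν : Measure ℝ} [IsFiniteMeasure ν] {z : ℝ} (hz : 0 < z) :
    zetaMinus s ν z ≤
      (1 / |s (-z)|) * max (cY s ν z - cY s ν (-z) - s z * (ν (Ici z)).toReal) 0 *
          (if (argYMinus s ν z).Nonempty ∧ sInf (argYMinus s ν z) < z then (1 : ℝ) else 0)
        + (ν (Ici z)).toReal := by
  have hB : 0 ≤ (ν (Ici z)).toReal := ENNReal.toReal_nonneg
  by_cases hne : (argYMinus s ν z).Nonempty
  · by_cases hlt : sInf (argYMinus s ν z) < z
    · rw [if_pos ⟨hne, hlt⟩, mul_one]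
      obtain ⟨y0, hy0, hy0z⟩ : ∃ y0 ∈ argYMinus s ν z, y0 < z := by
        by_contra hc
        push_neg at hc
        exact absurd (le_csInf hne fun y hy => hc y hy) (not_le.mpr hlt)
      exact step2_minus hs hmono hs0 hz hy0 hy0z.le
    · rw [if_neg (by tauto), mul_zero, zero_add]
      obtain ⟨y0, hy0⟩ := hne
      have hbdd : BddBelow (argYMinus s ν z) := ⟨0, fun y hy => hy.1.le⟩
      have hzy0 : z ≤ y0 := le_trans (not_lt.mp hlt) (csInf_le hbdd hy0)
      have hy0p : 0 < y0 := hy0.1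
      have h1 : zetaMinus s ν z ≤ (ν (Ici y0)).toReal := by
        refine le_measure_Ici_of_lt hy0p fun t ht1 ht2 => ?_
        exact step1_minus hs hmono hs0 hz hy0 ht1 ht2
      refine h1.trans (ENNReal.toReal_mono (measure_ne_top ν _)
        (measure_mono (Ici_subset_Ici.mpr hzy0)))
  · rw [zetaMinus, if_neg hne, if_neg (by tauto), mul_zero, zero_add]
    exact hB

lemma tail_split {ν : Measure ℝ} [IsFiniteMeasure ν] {z : ℝ} (hz : 0 < z) :
    (ν {y : ℝ | z ≤ |y|}).toReal = (ν (Iic (-z))).toReal + (ν (Ici z)).toReal := by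
  have hset : {y : ℝ | z ≤ |y|} = Iic (-z) ∪ Ici z := by
    ext y
    simp only [mem_setOf_eq, mem_union, mem_Iic, mem_Ici, le_abs, le_neg]
    tauto
  have hdisj : Disjoint (Iic (-z)) (Ici z) :=
    Iic_disjoint_Ici.mpr (by simp; linarith)
  rw [hset, measure_union hdisj measurableSet_Ici,
    ENNReal.toReal_add (measure_ne_top _ _) (measure_ne_top _ _)]

/-- Lemma 3 of the paper: upper bounds on `ν₊` and `ν₋`.  The indicator
`1_{z > ρ₊(z)}` is nonzero exactly when the infimum defining `ζ₊(z)` is attained and its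
smallest minimiser `ρ₊(z) = sInf (argYPlus s ν z)` satisfies `ρ₊(z) < z`; similarly
for `ρ₋`.  `[a]₊ = max a 0`. -/
theorem nuPlus_nuMinus_upper_bounds
    (s : ℝ → ℝ) (hs : Continuous s) (hmono : StrictMono s) (hs0 : s 0 = 0)
    (ν : Measure ℝ) [IsProbabilityMeasure ν] (hν0 : ν {0} = 0) :
    ∀ z : ℝ, 0 < z →
      nuPlus s ν z ≤
        (1 / s z) * max (cY s ν (-z) - cY s ν z - |s (-z)| * (ν (Iic (-z))).toReal) 0 *
            (if (argYPlus s ν z).Nonempty ∧ sInf (argYPlus s ν z) < z then (1 : ℝ) else 0)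
          + (ν {y : ℝ | z ≤ |y|}).toReal ∧
      nuMinus s ν z ≤
        (1 / |s (-z)|) * max (cY s ν z - cY s ν (-z) - s z * (ν (Ici z)).toReal) 0 *
            (if (argYMinus s ν z).Nonempty ∧ sInf (argYMinus s ν z) < z then (1 : ℝ) else 0)
          + (ν {y : ℝ | z ≤ |y|}).toReal := by

  intro z hz
  constructor
  · rw [nuPlus, tail_split hz]
    have := zetaPlus_le hs hmono hs0 (ν := ν) hz
    linarith
  · rw [nuMinus, tail_split hz]
    have := zetaMinus_le hs hmono hs0 (ν := ν) hz
    linarith
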